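/- Let w be a weight structure on a triangulated category C and m ≤ n integers. An object O of C avoids weights m,…,n (i.e., id_O kills weights m,…,n) if and only if O is without weight i for every integer i with m ≤ i ≤ n. -/

import Mathlib

open CategoryTheory Limits Pretriangulated

structure WeightStructure (C : Type*) [Category C] [Preadditive C] [HasZeroObject C]
    [HasShift C ℤ] [∀ n : ℤ, (CategoryTheory.shiftFunctor C n).Additive] [Pretriangulated C] where
  le : Set C
  ge : Set C
  le_retract : ∀ ⦃X Y : C⦄, Y ∈ le → ∀ (i : X ⟶ Y) (r : Y ⟶ X), i ≫ r = 𝟙 X → X ∈ le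
  ge_retract : ∀ ⦃X Y : C⦄, Y ∈ ge → ∀ (i : X ⟶ Y) (r : Y ⟶ X), i ≫ r = 𝟙 X → X ∈ ge
  le_shift : ∀ ⦃X : C⦄, X ∈ le → X⟦(-1 : ℤ)⟧ ∈ le
  ge_shift : ∀ ⦃X : C⦄, X ∈ ge → X⟦(1 : ℤ)⟧ ∈ ge
  orth : ∀ ⦃X Y : C⦄, X ∈ le → Y ∈ ge → ∀ f : X ⟶ Y⟦(1 : ℤ)⟧, f = 0
  decomp : ∀ M : C, ∃ (L R : C) (f : L ⟶ M) (g : M ⟶ R) (δ : R ⟶ L⟦(1 : ℤ)⟧),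
    (Triangle.mk f g δ ∈ distTriang C) ∧ L ∈ le ∧ R⟦(-1 : ℤ)⟧ ∈ ge

namespace WeightStructure

variable {C : Type*} [Category C] [Preadditive C] [HasZeroObject C]
  [HasShift C ℤ] [∀ n : ℤ, (CategoryTheory.shiftFunctor C n).Additive] [Pretriangulated C]
  (w : WeightStructure C)

/-- The class `C_{w ≤ n} = C_{w≤0}[n]`. -/
def Le (n : ℤ) : Set C := {X | X⟦(-n)⟧ ∈ w.le}

/-- The class `C_{w ≥ n} = C_{w≥0}[n]`. -/
def Ge (n : ℤ) : Set C := {X | X⟦(-n)⟧ ∈ w.ge}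

/-- `f, g, δ` form a `k`-weight decomposition triangle of `M`. -/
def IsWeightDecomp (k : ℤ) {A M B : C} (f : A ⟶ M) (g : M ⟶ B) (δ : B ⟶ A⟦(1 : ℤ)⟧) : Prop :=
  (Triangle.mk f g δ ∈ distTriang C) ∧ A ∈ w.Le k ∧ B ∈ w.Ge (k + 1)

/-- `g : M ⟶ N` kills weights `m,…,n`. -/
def KillsWeights (m n : ℤ) {M N : C} (g : M ⟶ N) : Prop :=
  ∃ (A B A' B' : C) (a : A ⟶ M) (b : M ⟶ B) (δ : B ⟶ A⟦(1 : ℤ)⟧)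
    (a' : A' ⟶ N) (b' : N ⟶ B') (δ' : B' ⟶ A'⟦(1 : ℤ)⟧),
    w.IsWeightDecomp n a b δ ∧ w.IsWeightDecomp (m - 1) a' b' δ' ∧ a ≫ g ≫ b' = 0

/-- `M` is without weights `m,…,n`. -/
def WithoutWeights (m n : ℤ) (M : C) : Prop := w.KillsWeights m n (𝟙 M)

end WeightStructure

namespace WeightStructure

variable {C : Type*} [Category C] [Preadditive C] [HasZeroObject C]
  [HasShift C ℤ] [∀ n : ℤ, (CategoryTheory.shiftFunctor C n).Additive] [Pretriangulated C]
  (w : WeightStructure C)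

lemma le_of_iso' {X Y : C} (e : X ≅ Y) (h : Y ∈ w.le) : X ∈ w.le :=
  w.le_retract h e.hom e.inv e.hom_inv_id

lemma ge_of_iso' {X Y : C} (e : X ≅ Y) (h : Y ∈ w.ge) : X ∈ w.ge :=
  w.ge_retract h e.hom e.inv e.hom_inv_id

lemma mem_Le_succ' {k : ℤ} {X : C} (h : X ∈ w.Le k) : X ∈ w.Le (k + 1) :=
  w.le_of_iso' ((shiftFunctorAdd' C (-k) (-1) (-(k+1)) (by ring)).app X) (w.le_shift h)

lemma mem_Ge_pred' {k : ℤ} {X : C} (h : X ∈ w.Ge (k + 1)) : X ∈ w.Ge k :=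
  w.ge_of_iso' ((shiftFunctorAdd' C (-(k+1)) 1 (-k) (by ring)).app X) (w.ge_shift h)

lemma Le_mono' {k k' : ℤ} (hk : k ≤ k') {X : C} (h : X ∈ w.Le k) : X ∈ w.Le k' :=
  Int.le_induction (motive := fun j _ => X ∈ w.Le j) h (fun _ _ ih => w.mem_Le_succ' ih) k' hk

lemma Ge_anti' {k k' : ℤ} (hk : k ≤ k') {X : C} (h : X ∈ w.Ge k') : X ∈ w.Ge k :=
  Int.le_induction (motive := fun j _ => X ∈ w.Ge j → X ∈ w.Ge k) id
    (fun _ _ ih hj => ih (w.mem_Ge_pred' hj)) k' hk h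

/-- Generalized orthogonality. -/
lemma orthLG (k : ℤ) {X Y : C} (hX : X ∈ w.Le k) (hY : Y ∈ w.Ge (k + 1)) (f : X ⟶ Y) :
    f = 0 := by
  have e := (shiftFunctorAdd' C (-(k+1)) 1 (-k) (by ring)).app Y
  have h0 : (shiftFunctor C (-k)).map f ≫ e.hom = 0 := w.orth hX hY _
  have h1 : (shiftFunctor C (-k)).map f = 0 := by
    rw [← Category.comp_id ((shiftFunctor C (-k)).map f), ← e.hom_inv_id,
      ← Category.assoc, h0, zero_comp]
  apply (shiftFunctor C (-k)).map_injective
  rw [h1, Functor.map_zero]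

/-- Existence of a `k`-weight decomposition of any object. -/
lemma exists_weightDecomp (k : ℤ) (M : C) :
    ∃ (A B : C) (a : A ⟶ M) (b : M ⟶ B) (δ : B ⟶ A⟦(1 : ℤ)⟧), w.IsWeightDecomp k a b δ := by
  obtain ⟨L, R, f, g, δ, hT, hL, hR⟩ := w.decomp (M⟦(-k : ℤ)⟧)
  let T := (Triangle.shiftFunctor C k).obj (Triangle.mk f g δ)
  let e := (shiftFunctorCompIsoId C (-k) k (by ring)).app M
  have hT' : Triangle.mk (T.mor₁ ≫ e.hom) (e.inv ≫ T.mor₂) T.mor₃ ∈ distTriang C := by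
    refine isomorphic_distinguished _ (Triangle.shift_distinguished _ hT k) _ ?_
    refine Triangle.isoMk _ _ (Iso.refl _) e.symm (Iso.refl _) ?_ ?_ ?_
    · exact ((Category.id_comp _).trans ((Category.comp_id _).symm.trans
        ((whisker_eq _ e.hom_inv_id).symm.trans (Category.assoc _ _ _).symm))).symm
    · exact Category.comp_id _
    · exact ((Category.id_comp _).trans ((Category.comp_id _).symm.trans
        (whisker_eq _ (CategoryTheory.Functor.map_id _ _).symm))).symm
  refine ⟨L⟦(k : ℤ)⟧, R⟦(k : ℤ)⟧, T.mor₁ ≫ e.hom, e.inv ≫ T.mor₂, T.mor₃, hT', ?_, ?_⟩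
  · exact w.le_of_iso' ((shiftFunctorCompIsoId C k (-k) (by ring)).app L) hL
  · exact w.ge_of_iso' ((shiftFunctorAdd' C k (-(k+1)) (-1) (by ring)).app R).symm hR

/-- The key lemma: if `g` kills weights `m,…,n`, then for ANY `n'`-weight decomposition of the
source and `(m'-1)`-weight decomposition of the target (with `m ≤ m'`, `n' ≤ n`), the relevant
composite vanishes. -/
lemma kills_vanish {m n m' n' : ℤ} (hm : m ≤ m') (hn : n' ≤ n) {M N : C} {g : M ⟶ N}
    (h : w.KillsWeights m n g) {A₁ B₁ A₂ B₂ : C} {a₁ : A₁ ⟶ M} {b₁ : M ⟶ B₁}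
    {δ₁ : B₁ ⟶ A₁⟦(1 : ℤ)⟧} (h₁ : w.IsWeightDecomp n' a₁ b₁ δ₁)
    {a₂ : A₂ ⟶ N} {b₂ : N ⟶ B₂} {δ₂ : B₂ ⟶ A₂⟦(1 : ℤ)⟧}
    (h₂ : w.IsWeightDecomp (m' - 1) a₂ b₂ δ₂) :
    a₁ ≫ g ≫ b₂ = 0 := by
  obtain ⟨A, B, A', B', a, b, δ, a', b', δ', hA, hA', hz⟩ := h
  -- `a₁` factors through `a`
  have hb : a₁ ≫ b = 0 :=
    w.orthLG n (w.Le_mono' hn h₁.2.1) hA.2.2 _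
  obtain ⟨c, hc⟩ := Triangle.coyoneda_exact₂ _ hA.1 a₁ hb
  -- `b₂` factors through `b'`
  have ha : a' ≫ b₂ = 0 :=
    w.orthLG (m' - 1) (w.Le_mono' (by omega) hA'.2.1) h₂.2.2 _
  obtain ⟨d, hd⟩ := Triangle.yoneda_exact₂ _ hA'.1 b₂ ha
  change A₁ ⟶ A at c
  change B' ⟶ B₂ at d
  rw [hc, hd]
  dsimp only [Triangle.mk] at *
  have hz' : a ≫ g ≫ b' ≫ d = 0 := by
    rw [show a ≫ g ≫ b' ≫ d = (a ≫ g ≫ b') ≫ d by simp only [Category.assoc], hz, zero_comp]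
  rw [Category.assoc, hz', comp_zero]

/-- Restriction of the range of killed weights. -/
lemma kills_restrict {m n m' n' : ℤ} (hm : m ≤ m') (hn : n' ≤ n) {M N : C} {g : M ⟶ N}
    (h : w.KillsWeights m n g) : w.KillsWeights m' n' g := by
  obtain ⟨A₁, B₁, a₁, b₁, δ₁, h₁⟩ := w.exists_weightDecomp n' M
  obtain ⟨A₂, B₂, a₂, b₂, δ₂, h₂⟩ := w.exists_weightDecomp (m' - 1) N
  exact ⟨A₁, B₁, A₂, B₂, a₁, b₁, δ₁, a₂, b₂, δ₂, h₁, h₂, w.kills_vanish hm hn h h₁ h₂⟩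

/-- Gluing: composing a morphism killing weights `k+1,…,n` with one killing weights `m,…,k`
yields a morphism killing weights `m,…,n`. -/
lemma kills_glue {m k n : ℤ} {M N P : C} {g : M ⟶ N} {h : N ⟶ P}
    (hg : w.KillsWeights (k + 1) n g) (hh : w.KillsWeights m k h) :
    w.KillsWeights m n (g ≫ h) := by
  obtain ⟨A₃, B₃, a₃, b₃, δ₃, h₃⟩ := w.exists_weightDecomp n M
  obtain ⟨A₄, B₄, a₄, b₄, δ₄, h₄⟩ := w.exists_weightDecomp (m - 1) P
  -- a `k`-weight decomposition of `N` coming from `hg`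
  have hgc := hg
  obtain ⟨_, _, A₁, B₁, _, _, _, a₁, b₁, δ₁, _, h₁, _⟩ := hgc
  rw [show k + 1 - 1 = k by ring] at h₁
  have hv : a₃ ≫ g ≫ b₁ = 0 := by
    have := w.kills_vanish (le_refl (k + 1)) (le_refl n) hg h₃
      (h₂ := by rw [show k + 1 - 1 = k by ring]; exact h₁)
    exact this
  obtain ⟨c, hc⟩ := Triangle.coyoneda_exact₂ _ h₁.1 (a₃ ≫ g) ((Category.assoc _ _ _).trans hv)
  change A₃ ⟶ A₁ at c
  have hv' : a₁ ≫ h ≫ b₄ = 0 := w.kills_vanish (le_refl m) (le_refl k) hh h₁ h₄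
  refine ⟨A₃, B₃, A₄, B₄, a₃, b₃, δ₃, a₄, b₄, δ₄, h₃, h₄, ?_⟩
  have : a₃ ≫ (g ≫ h) ≫ b₄ = (a₃ ≫ g) ≫ h ≫ b₄ := by simp
  rw [this]
  erw [hc]
  dsimp only [Triangle.mk]
  rw [Category.assoc, hv', comp_zero]

end WeightStructure

/-- an object avoids weights `m,…,n` iff it is without weight `i`
for every `m ≤ i ≤ n`. -/
theorem withoutWeights_iff_forall {C : Type*} [Category C] [Preadditive C] [HasZeroObject C]
    [HasShift C ℤ] [∀ n : ℤ, (CategoryTheory.shiftFunctor C n).Additive] [Pretriangulated C]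
    (w : WeightStructure C) (m n : ℤ) (hmn : m ≤ n) (O : C) :
    w.WithoutWeights m n O ↔ ∀ i : ℤ, m ≤ i → i ≤ n → w.WithoutWeights i i O := by
  constructor
  · intro hw i him hin
    exact w.kills_restrict him hin hw
  · intro hw
    refine Int.le_induction
      (motive := fun n' _ => (∀ i : ℤ, m ≤ i → i ≤ n' → w.WithoutWeights i i O) →
        w.WithoutWeights m n' O)
      (fun h => h m le_rfl le_rfl) ?_ n hmn hw
    intro j hj ih h
    have h1 : w.WithoutWeights m j O := ih (fun i him hij => h i him (by omega))
    have h2 : w.WithoutWeights (j + 1) (j + 1) O := h (j + 1) (by omega) le_rfl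
    have h3 := w.kills_glue (k := j) h2 h1
    rwa [Category.comp_id] at h3
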